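/- For $k \geq 3$, the vertex set of $G_k$ can be partitioned into sets $V_1, \dots, V_{k-1}$ where $V_1 = \{\{1\}, \{2\}, \{3\}\}$ induces an independent set, $V_2 = \{\{1,2\},\{1,3\},\{2,3\}\}$ induces a triangle (complete graph $K_3$), and for $3 \leq \ell \leq k-1$, $V_\ell = \{\{\ell+1, j\} : 1 \leq j \leq \ell+1\}$ (where $\{\ell+1,\ell+1\}$ means $\{\ell+1\}$) induces a complete graph on $\ell + 1$ vertices. -/

import Mathlib

/-- Vertex set of `G_k`: subsets of `[k]` of size one or two (here `[k]` is `Fin k`,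
so the elements `1, …, k` of the paper are `0, …, k-1`). -/
def GVert (k : ℕ) : Type := {S : Finset (Fin k) // S.card = 1 ∨ S.card = 2}

/-- The graph `G_k`: two such subsets are adjacent iff they intersect. -/
def Gk (k : ℕ) : SimpleGraph (GVert k) :=
  SimpleGraph.fromRel (fun S T => (S.1 ∩ T.1).Nonempty)

namespace Stmt11Aux

variable {k : ℕ}

lemma vert_nonempty (v : GVert k) : v.1.Nonempty :=
  Finset.card_pos.mp (by rcases v.2 with h | h <;> omega)

/-- The maximum element of a vertex. -/
def gmax (v : GVert k) : Fin k := v.1.max' (vert_nonempty v)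

lemma gmax_mem (v : GVert k) : gmax v ∈ v.1 := Finset.max'_mem _ _

lemma le_gmax (v : GVert k) {a : Fin k} (ha : a ∈ v.1) : a.val ≤ (gmax v).val :=
  Finset.le_max' _ _ ha

/-- The coloring. -/
def col (k : ℕ) (hk : 3 ≤ k) (v : GVert k) : Fin (k - 1) :=
  if (gmax v).val < 3 then
    (if v.1.card = 1 then ⟨0, by have := hk; omega⟩ else ⟨1, by have := hk; omega⟩)
  else ⟨(gmax v).val - 1, by have := (gmax v).isLt; omega⟩

lemma col_eq_zero_iff (hk : 3 ≤ k) (v : GVert k) :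
    col k hk v = ⟨0, by have := hk; omega⟩ ↔ v.1.card = 1 ∧ ∀ a ∈ v.1, a.val < 3 := by
  unfold col
  split_ifs with h1 h2
  · simp only [h2, true_and]
    constructor
    · intro _ a ha
      exact lt_of_le_of_lt (le_gmax v ha) h1
    · intro _; trivial
  · constructor
    · intro h; exact absurd (congrArg Fin.val h) (by simp)
    · intro h; exact absurd h.1 h2
  · constructor
    · intro h; have := congrArg Fin.val h; simp at this; omega
    · intro h; exact absurd (h.2 _ (gmax_mem v)) h1

lemma col_eq_one_iff (hk : 3 ≤ k) (v : GVert k) :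
    col k hk v = ⟨1, by have := hk; omega⟩ ↔ v.1.card = 2 ∧ ∀ a ∈ v.1, a.val < 3 := by
  unfold col
  split_ifs with h1 h2
  · constructor
    · intro h; exact absurd (congrArg Fin.val h) (by simp)
    · intro h; omega
  · have hc2 : v.1.card = 2 := by rcases v.2 with h | h; exact absurd h h2; exact h
    simp only [hc2, true_and]
    constructor
    · intro _ a ha
      exact lt_of_le_of_lt (le_gmax v ha) h1
    · intro _; trivial
  · constructor
    · intro h; have := congrArg Fin.val h; simp at this; omega
    · intro h; exact absurd (h.2 _ (gmax_mem v)) h1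

lemma col_eq_iff (hk : 3 ≤ k) (v : GVert k) (i : Fin (k - 1)) (hi : 2 ≤ i.val) :
    col k hk v = i ↔
      ((⟨i.val + 1, by have := i.isLt; have := hk; omega⟩ : Fin k) ∈ v.1 ∧
        ∀ b ∈ v.1, b.val ≤ i.val + 1) := by
  unfold col
  split_ifs with h1 h2
  · constructor
    · intro h; have := congrArg Fin.val h; simp at this; omega
    · rintro ⟨hm, -⟩; have := le_gmax v hm; simp at this; omega
  · constructor
    · intro h; have := congrArg Fin.val h; simp at this; omega
    · rintro ⟨hm, -⟩; have := le_gmax v hm; simp at this; omega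
  · constructor
    · intro h
      have hval : (gmax v).val = i.val + 1 := by
        have := congrArg Fin.val h; simp at this; omega
      constructor
      · have : (⟨i.val + 1, by have := i.isLt; have := hk; omega⟩ : Fin k) = gmax v :=
          Fin.ext (by simp [hval])
        rw [this]; exact gmax_mem v
      · intro b hb; have := le_gmax v hb; omega
    · rintro ⟨hm, hle⟩
      have h1 : i.val + 1 ≤ (gmax v).val := le_gmax v hm
      have h2 : (gmax v).val ≤ i.val + 1 := hle _ (gmax_mem v)
      exact Fin.ext (by simp; omega)

end Stmt11Aux

open Stmt11Aux in
theorem stmt11 (k : ℕ) (hk : 3 ≤ k) :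
    ∃ c : GVert k → Fin (k - 1),
      ({v : GVert k | c v = ⟨0, by omega⟩} =
          {v : GVert k | v.1.card = 1 ∧ ∀ a ∈ v.1, a.val < 3}) ∧
      ({v : GVert k | c v = ⟨0, by omega⟩}.Pairwise fun u v => ¬ (Gk k).Adj u v) ∧
      ({v : GVert k | c v = ⟨1, by omega⟩} =
          {v : GVert k | v.1.card = 2 ∧ ∀ a ∈ v.1, a.val < 3}) ∧
      (Gk k).IsClique {v : GVert k | c v = ⟨1, by omega⟩} ∧
      ({v : GVert k | c v = ⟨1, by omega⟩}.ncard = 3) ∧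
      ∀ i : Fin (k - 1), 2 ≤ i.val →
        ({v : GVert k | c v = i} =
            {v : GVert k | (⟨i.val + 1, by have := i.isLt; omega⟩ : Fin k) ∈ v.1 ∧
              ∀ b ∈ v.1, b.val ≤ i.val + 1}) ∧
        (Gk k).IsClique {v : GVert k | c v = i} ∧
        {v : GVert k | c v = i}.ncard = i.val + 2 := by
  refine ⟨col k hk, ?_, ?_, ?_, ?_, ?_, ?_⟩
  · ext v; exact col_eq_zero_iff hk v
  · -- independence of V_0
    intro u hu v hv huv hadj
    rw [Set.mem_setOf_eq, col_eq_zero_iff hk] at hu hv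
    obtain ⟨x, hx⟩ := Finset.card_eq_one.mp hu.1
    obtain ⟨y, hy⟩ := Finset.card_eq_one.mp hv.1
    rw [Gk, SimpleGraph.fromRel_adj] at hadj
    rcases hadj.2 with h | h <;>
    · obtain ⟨a, ha⟩ := h
      simp only [hx, hy, Finset.mem_inter, Finset.mem_singleton] at ha
      have hxy : x = y := by
        rcases ha with ⟨h1, h2⟩
        first
        | exact h1.symm.trans h2
        | exact h2.symm.trans h1
      exact huv (Subtype.ext (by rw [hx, hy, hxy]))
  · ext v; exact col_eq_one_iff hk v
  · -- V_1 is a clique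
    intro u hu v hv huv
    rw [Set.mem_setOf_eq, col_eq_one_iff hk] at hu hv
    rw [Gk, SimpleGraph.fromRel_adj]
    refine ⟨huv, Or.inl ?_⟩
    by_contra hemp
    rw [Finset.not_nonempty_iff_eq_empty] at hemp
    have hdisj : Disjoint u.1 v.1 := Finset.disjoint_iff_inter_eq_empty.mpr hemp
    have hsub : u.1 ∪ v.1 ⊆ ({⟨0, by omega⟩, ⟨1, by omega⟩, ⟨2, by omega⟩} : Finset (Fin k)) := by
      intro a ha
      rcases Finset.mem_union.mp ha with h | h
      · have := hu.2 a h
        simp only [Finset.mem_insert, Finset.mem_singleton, Fin.ext_iff]; omega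
      · have := hv.2 a h
        simp only [Finset.mem_insert, Finset.mem_singleton, Fin.ext_iff]; omega
    have h4 : (u.1 ∪ v.1).card = 4 := by
      rw [Finset.card_union_of_disjoint hdisj, hu.1, hv.1]
    have h3 : ({⟨0, by omega⟩, ⟨1, by omega⟩, ⟨2, by omega⟩} : Finset (Fin k)).card ≤ 3 :=
      (Finset.card_insert_le _ _).trans (by
        exact Nat.succ_le_succ ((Finset.card_insert_le _ _).trans (by simp)))
    have := Finset.card_le_card hsub
    omega
  · -- ncard of V_1 is 3
    have h01 : (⟨0, by omega⟩ : Fin k) ≠ ⟨1, by omega⟩ := by simp [Fin.ext_iff]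
    have h02 : (⟨0, by omega⟩ : Fin k) ≠ ⟨2, by omega⟩ := by simp [Fin.ext_iff]
    have h12 : (⟨1, by omega⟩ : Fin k) ≠ ⟨2, by omega⟩ := by simp [Fin.ext_iff]
    set A : GVert k := ⟨{⟨0, by omega⟩, ⟨1, by omega⟩}, Or.inr (Finset.card_pair h01)⟩ with hA
    set B : GVert k := ⟨{⟨0, by omega⟩, ⟨2, by omega⟩}, Or.inr (Finset.card_pair h02)⟩ with hB
    set C : GVert k := ⟨{⟨1, by omega⟩, ⟨2, by omega⟩}, Or.inr (Finset.card_pair h12)⟩ with hC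
    have hset : {v : GVert k | col k hk v = ⟨1, by omega⟩} = {A, B, C} := by
      ext v
      rw [Set.mem_setOf_eq, col_eq_one_iff hk]
      constructor
      · rintro ⟨hc, hlt⟩
        obtain ⟨a, b, hab, hvab⟩ := Finset.card_eq_two.mp hc
        have ha3 : a.val < 3 := hlt a (by rw [hvab]; simp)
        have hb3 : b.val < 3 := hlt b (by rw [hvab]; simp)
        have hne : a.val ≠ b.val := fun h => hab (Fin.ext h)
        simp only [Set.mem_insert_iff, Set.mem_singleton_iff]
        have ha : a.val = 0 ∨ a.val = 1 ∨ a.val = 2 := by omega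
        have hb : b.val = 0 ∨ b.val = 1 ∨ b.val = 2 := by omega
        rcases ha with h | h | h <;> rcases hb with h' | h' | h' <;> try omega
        · exact Or.inl (Subtype.ext (by
            rw [hvab, show a = (⟨0, by omega⟩ : Fin k) from Fin.ext h,
              show b = (⟨1, by omega⟩ : Fin k) from Fin.ext h']))
        · exact Or.inr (Or.inl (Subtype.ext (by
            rw [hvab, show a = (⟨0, by omega⟩ : Fin k) from Fin.ext h,
              show b = (⟨2, by omega⟩ : Fin k) from Fin.ext h'])))
        · exact Or.inl (Subtype.ext (by
            rw [hvab, Finset.pair_comm, show a = (⟨1, by omega⟩ : Fin k) from Fin.ext h,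
              show b = (⟨0, by omega⟩ : Fin k) from Fin.ext h']))
        · exact Or.inr (Or.inr (Subtype.ext (by
            rw [hvab, show a = (⟨1, by omega⟩ : Fin k) from Fin.ext h,
              show b = (⟨2, by omega⟩ : Fin k) from Fin.ext h'])))
        · exact Or.inr (Or.inl (Subtype.ext (by
            rw [hvab, Finset.pair_comm, show a = (⟨2, by omega⟩ : Fin k) from Fin.ext h,
              show b = (⟨0, by omega⟩ : Fin k) from Fin.ext h'])))
        · exact Or.inr (Or.inr (Subtype.ext (by
            rw [hvab, Finset.pair_comm, show a = (⟨2, by omega⟩ : Fin k) from Fin.ext h,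
              show b = (⟨1, by omega⟩ : Fin k) from Fin.ext h'])))
      · rintro (rfl | rfl | rfl) <;>
          exact ⟨by simp [hA, hB, hC, Finset.card_pair, h01, h02, h12], by
            intro a ha
            simp only [hA, hB, hC, Finset.mem_insert, Finset.mem_singleton] at ha
            rcases ha with rfl | rfl <;> simp⟩
    rw [hset]
    have hAB : A ≠ B := fun h => by
      have : (⟨1, by omega⟩ : Fin k) ∈ B.1 := by
        rw [← h]; simp [hA]
      simp [hB, Fin.ext_iff] at this
    have hAC : A ≠ C := fun h => by
      have : (⟨0, by omega⟩ : Fin k) ∈ C.1 := by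
        rw [← h]; simp [hA]
      simp [hC, Fin.ext_iff] at this
    have hBC : B ≠ C := fun h => by
      have : (⟨0, by omega⟩ : Fin k) ∈ C.1 := by
        rw [← h]; simp [hB]
      simp [hC, Fin.ext_iff] at this
    rw [Set.ncard_insert_of_notMem (by simp [hAB, hAC])
      ((Set.finite_singleton _).insert _), Set.ncard_pair hBC]
  · -- parts V_i for i ≥ 2
    intro i hi
    have him : i.val + 1 < k := by have := i.isLt; omega
    set m : Fin k := ⟨i.val + 1, him⟩ with hm
    refine ⟨?_, ?_, ?_⟩
    · ext v; exact col_eq_iff hk v i hi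
    · intro u hu v hv huv
      rw [Set.mem_setOf_eq, col_eq_iff hk _ _ hi] at hu hv
      rw [Gk, SimpleGraph.fromRel_adj]
      exact ⟨huv, Or.inl ⟨m, Finset.mem_inter.mpr ⟨hu.1, hv.1⟩⟩⟩
    · -- cardinality
      have hcard : ∀ j : Fin (i.val + 2),
          (insert m {(⟨j.val, by have := j.isLt; omega⟩ : Fin k)} : Finset (Fin k)).card = 1 ∨
          (insert m {(⟨j.val, by have := j.isLt; omega⟩ : Fin k)} : Finset (Fin k)).card = 2 := by
        intro j
        by_cases h : m = (⟨j.val, by have := j.isLt; omega⟩ : Fin k)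
        · left; rw [← h]; simp
        · right
          rw [Finset.card_insert_of_notMem (Finset.notMem_singleton.mpr h)]
          simp
      set f : Fin (i.val + 2) → GVert k := fun j =>
        ⟨insert m {(⟨j.val, by have := j.isLt; omega⟩ : Fin k)}, hcard j⟩ with hf
      have hmemf : ∀ j, (⟨j.val, by have := j.isLt; omega⟩ : Fin k) ∈ (f j).1 := by
        intro j; simp [hf]
      have hset : {v : GVert k | col k hk v = i} = Set.range f := by
        ext v
        rw [Set.mem_setOf_eq, col_eq_iff hk _ _ hi]
        constructor
        · rintro ⟨hmv, hle⟩
          rcases v.2 with hc | hc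
          · obtain ⟨x, hx⟩ := Finset.card_eq_one.mp hc
            have hxm : x = m := by
              rw [hx] at hmv
              exact (Finset.mem_singleton.mp hmv).symm
            refine ⟨⟨i.val + 1, by omega⟩, Subtype.ext ?_⟩
            simp only [hf]
            rw [hx, hxm]
            simp [hm]
          · obtain ⟨a, b, hab, hvab⟩ := Finset.card_eq_two.mp hc
            rw [hvab] at hmv
            rcases Finset.mem_insert.mp hmv with h | h
            · -- m = a
              have hb : b.val ≤ i.val + 1 := hle b (by rw [hvab]; simp)
              refine ⟨⟨b.val, by omega⟩, Subtype.ext ?_⟩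
              simp only [hf]
              rw [hvab, ← h]
            · -- m = b
              have hbm : b = m := (Finset.mem_singleton.mp h).symm
              have ha : a.val ≤ i.val + 1 := hle a (by rw [hvab]; simp)
              refine ⟨⟨a.val, by omega⟩, Subtype.ext ?_⟩
              simp only [hf]
              rw [hvab, hbm, Finset.pair_comm]
        · rintro ⟨j, rfl⟩
          refine ⟨by simp [hf]; left; rfl, ?_⟩
          intro b hb
          simp only [hf, Finset.mem_insert, Finset.mem_singleton] at hb
          rcases hb with rfl | rfl
          · exact Nat.le_of_eq rfl
          · exact Nat.le_of_lt_succ j.isLt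
      have hinj : Function.Injective f := by
        intro j j' hjj
        have h1 : (⟨j.val, by have := j.isLt; omega⟩ : Fin k) ∈ (f j').1 := by
          rw [← hjj]; exact hmemf j
        have h2 : (⟨j'.val, by have := j'.isLt; omega⟩ : Fin k) ∈ (f j).1 := by
          rw [hjj]; exact hmemf j'
        simp only [hf, Finset.mem_insert, Finset.mem_singleton, Fin.ext_iff, Fin.val_mk]
          at h1 h2
        have hj := j.isLt; have hj' := j'.isLt
        have hmval : m.val = i.val + 1 := rfl
        exact Fin.ext (by omega)
      rw [hset, ← Set.image_univ, Set.ncard_image_of_injective _ hinj, Set.ncard_univ,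
        Nat.card_eq_fintype_card, Fintype.card_fin]
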